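/- Let V : (0,∞) → ℂ be a bounded measurable function with compact support. For k ∈ ℂ \ {0} define the kernel M_k(x,y) = √V(x) · g_k(x,y) · √|V(y)| on (0,∞) × (0,∞), and define M_0(x,y) = √V(x) · min(x,y) · √|V(y)|. Then each M_k belongs to L²((0,∞) × (0,∞)) and the map k ↦ M_k is an entire function from ℂ to L²((0,∞) × (0,∞)); that is, the Birman–Schwinger operator √V (−Δ − k²)^{-1} √|V| for the Dirichlet Laplacian on the half-line extends to an entire family of Hilbert–Schmidt operators. -/

import Mathlib

open MeasureTheory Set
open scoped ENNReal NNReal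

/-- The integral kernel of the resolvent `(-Δ - k²)⁻¹` of the Dirichlet Laplacian on the
half-line `(0,∞)`. -/
noncomputable def halfLineResolventKernel (k : ℂ) (x y : ℝ) : ℂ :=
  (Complex.exp (Complex.I * k * (x + y)) - Complex.exp (Complex.I * k * |x - y|)) /
    (2 * Complex.I * k)

/-- `√V(x) = V(x)/√|V(x)|` if `V(x) ≠ 0`, and `√V(x) = 0` otherwise. -/
noncomputable def sqrtC (V : ℝ → ℂ) (x : ℝ) : ℂ :=
  if V x = 0 then 0 else V x / (Real.sqrt (‖V x‖) : ℂ)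

private lemma norm_sqrtC' (V : ℝ → ℂ) (x : ℝ) :
    ‖sqrtC V x‖ = Real.sqrt (‖V x‖) := by
  unfold sqrtC
  split_ifs with h
  · simp [h]
  · rw [norm_div, Complex.norm_real, Real.norm_eq_abs, abs_of_nonneg (Real.sqrt_nonneg _),
      Real.div_sqrt]

private lemma measurable_sqrtC' {V : ℝ → ℂ} (hmeas : Measurable V) :
    Measurable (sqrtC V) := by
  unfold sqrtC
  refine Measurable.ite (hmeas (measurableSet_singleton 0)) measurable_const ?_
  exact hmeas.div (Complex.measurable_ofReal.comp (Real.continuous_sqrt.measurable.comp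
    (hmeas.norm)))

private lemma Lp_coeFn_sum {α E : Type*} [MeasurableSpace α] [NormedAddCommGroup E]
    {μ : Measure α} {q : ℝ≥0∞} {ι : Type*} (s : Finset ι) (f : ι → MeasureTheory.Lp E q μ) :
    ⇑(∑ i ∈ s, f i) =ᵐ[μ] fun p => ∑ i ∈ s, f i p := by
  classical
  induction s using Finset.induction_on with
  | empty => simp only [Finset.sum_empty]; exact Lp.coeFn_zero E q μ
  | insert j s' h ih =>
      rw [Finset.sum_insert h]
      filter_upwards [Lp.coeFn_add (f j) (∑ i ∈ s', f i), ih] with x hx1 hx2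
      rw [hx1, Pi.add_apply, hx2, Finset.sum_insert h]

/-- The kernel `M_k(x,y) = √V(x) g_k(x,y) √|V(y)|` of the Birman–Schwinger operator for
`k ≠ 0`, and its value `√V(x) min(x,y) √|V(y)|` at `k = 0`. -/
noncomputable def bsKernel (V : ℝ → ℂ) (k : ℂ) (p : ℝ × ℝ) : ℂ :=
  sqrtC V p.1 *
    (if k = 0 then ((min p.1 p.2 : ℝ) : ℂ) else halfLineResolventKernel k p.1 p.2) *
    (Real.sqrt (‖V p.2‖) : ℂ)

set_option maxHeartbeats 2000000 in
/-- For a bounded measurable `V` with compact support in `(0,∞)`, each Birman–Schwinger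
kernel `M_k` lies in `L²((0,∞) × (0,∞))` and the map `k ↦ M_k` is an entire function with
values in `L²((0,∞) × (0,∞))`: the Birman–Schwinger operator
`√V (-Δ - k²)⁻¹ √|V|` extends to an entire family of Hilbert–Schmidt operators. -/
theorem bsKernel_entire (V : ℝ → ℂ) (hmeas : Measurable V)
    (hbdd : ∃ C : ℝ, ∀ x : ℝ, ‖V x‖ ≤ C)
    (hsupp : HasCompactSupport V) (hpos : Function.support V ⊆ Ioi 0) :
    ∃ h : ∀ k : ℂ, MemLp (bsKernel V k) 2
        ((volume.restrict (Ioi (0 : ℝ))).prod (volume.restrict (Ioi (0 : ℝ)))),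
      Differentiable ℂ fun k => (h k).toLp (bsKernel V k) := by
  classical
  set μ : Measure (ℝ × ℝ) :=
    (volume.restrict (Ioi (0 : ℝ))).prod (volume.restrict (Ioi (0 : ℝ))) with hμdef
  obtain ⟨C₀, hC₀⟩ := hbdd
  set C : ℝ := max C₀ 0 with hCdef
  have hC : ∀ x, ‖V x‖ ≤ C := fun x => le_trans (hC₀ x) (le_max_left _ _)
  have hC0 : (0:ℝ) ≤ C := le_max_right _ _
  set S : Set ℝ := tsupport V with hSdef
  have hScompact : IsCompact S := hsupp
  obtain ⟨R₀, hR₀⟩ := hScompact.isBounded.exists_norm_le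
  set R : ℝ := max R₀ 0 with hRdef
  have hR0 : (0:ℝ) ≤ R := le_max_right _ _
  have hSR : ∀ x ∈ S, 0 ≤ x ∧ x ≤ R := by
    intro x hx
    have h1 : x ∈ Ici (0:ℝ) := by
      have : S ⊆ closure (Ioi (0:ℝ)) := closure_mono hpos
      simpa [closure_Ioi] using this hx
    exact ⟨h1, le_trans (le_trans (le_abs_self x) (hR₀ x hx)) (le_max_left _ _)⟩
  set T : Set (ℝ × ℝ) := S ×ˢ S with hTdef
  have hTmeas : MeasurableSet T :=
    (hScompact.isClosed.measurableSet).prod hScompact.isClosed.measurableSet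
  have hTfin : μ T < ⊤ := by
    rw [hμdef, hTdef, Measure.prod_prod]
    have h1 : volume.restrict (Ioi (0:ℝ)) S ≤ volume S :=
      Measure.restrict_le_self _
    exact ENNReal.mul_lt_top (lt_of_le_of_lt h1 hScompact.measure_lt_top)
      (lt_of_le_of_lt h1 hScompact.measure_lt_top)
  -- the weight and the coefficients
  set w : ℝ × ℝ → ℂ := fun p => sqrtC V p.1 * (Real.sqrt (‖V p.2‖) : ℂ) with hwdef
  set a : ℕ → ℝ × ℝ → ℂ := fun n p =>
    w p * (Complex.I ^ n *
      ((((p.1 + p.2 : ℝ) : ℂ)) ^ (n+1) - (((|p.1 - p.2| : ℝ) : ℂ)) ^ (n+1)) /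
        (2 * ((n+1).factorial : ℂ))) with hadef
  have hw_bound : ∀ p, ‖w p‖ ≤ C := by
    intro p
    rw [hwdef]
    have h1 : ‖sqrtC V p.1‖ ≤ Real.sqrt C := by
      rw [norm_sqrtC']; exact Real.sqrt_le_sqrt (hC _)
    have h2 : ‖((Real.sqrt (‖V p.2‖) : ℝ) : ℂ)‖ ≤ Real.sqrt C := by
      rw [Complex.norm_real, Real.norm_eq_abs, abs_of_nonneg (Real.sqrt_nonneg _)]
      exact Real.sqrt_le_sqrt (hC _)
    calc ‖sqrtC V p.1 * (Real.sqrt (‖V p.2‖) : ℂ)‖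
        ≤ Real.sqrt C * Real.sqrt C := by
          rw [norm_mul]
          exact mul_le_mul h1 h2 (norm_nonneg _) (Real.sqrt_nonneg _)
      _ = C := Real.mul_self_sqrt hC0
  have hw_zero : ∀ p : ℝ × ℝ, p ∉ T → w p = 0 := by
    intro p hp
    rw [hTdef, Set.mem_prod] at hp
    push_neg at hp
    by_cases h1 : p.1 ∈ S
    · have h2 := hp h1
      have : V p.2 = 0 := image_eq_zero_of_notMem_tsupport h2
      simp [hwdef, this]
    · have : V p.1 = 0 := image_eq_zero_of_notMem_tsupport h1
      simp [hwdef, sqrtC, this]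
  set bnd : ℕ → ℝ := fun n => C * (2*R)^(n+1) / ((n+1).factorial : ℝ) with hbnddef
  have hbnd0 : ∀ n, 0 ≤ bnd n := by
    intro n
    apply div_nonneg (mul_nonneg hC0 (pow_nonneg (by linarith) _))
    positivity
  have ha_bound : ∀ n p, ‖a n p‖ ≤ T.indicator (fun _ => bnd n) p := by
    intro n p
    by_cases hp : p ∈ T
    · rw [Set.indicator_of_mem hp]
      have hx := hSR p.1 hp.1
      have hy := hSR p.2 hp.2
      have hA : ‖((p.1 + p.2 : ℝ) : ℂ)‖ ≤ 2*R := by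
        rw [Complex.norm_real, Real.norm_eq_abs, abs_of_nonneg (by linarith [hx.1, hy.1])]
        linarith [hx.2, hy.2]
      have hB : ‖((|p.1 - p.2| : ℝ) : ℂ)‖ ≤ 2*R := by
        rw [Complex.norm_real, Real.norm_eq_abs, abs_abs, abs_le]
        constructor <;> [linarith [hx.2, hy.1]; linarith [hx.1, hy.2]]
      have hfact : (0:ℝ) < ((n+1).factorial : ℝ) := by positivity
      have h2 : ‖(2 * ((n+1).factorial : ℂ))‖ = 2 * ((n+1).factorial : ℝ) := by
        rw [norm_mul, Complex.norm_natCast]; norm_num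
      have hApow : ‖((p.1+p.2:ℝ):ℂ) ^ (n+1)‖ ≤ (2*R)^(n+1) := by
        rw [norm_pow]; exact pow_le_pow_left₀ (norm_nonneg _) hA _
      have hBpow : ‖((|p.1-p.2|:ℝ):ℂ) ^ (n+1)‖ ≤ (2*R)^(n+1) := by
        rw [norm_pow]; exact pow_le_pow_left₀ (norm_nonneg _) hB _
      have hX : ‖Complex.I ^ n *
          ((((p.1 + p.2 : ℝ) : ℂ)) ^ (n+1) - (((|p.1 - p.2| : ℝ) : ℂ)) ^ (n+1)) /
            (2 * ((n+1).factorial : ℂ))‖ ≤ (2*R)^(n+1) / ((n+1).factorial : ℝ) := by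
        rw [norm_div, norm_mul, norm_pow, Complex.norm_I, one_pow, one_mul, h2]
        calc ‖(((p.1 + p.2 : ℝ) : ℂ)) ^ (n+1) - (((|p.1 - p.2| : ℝ) : ℂ)) ^ (n+1)‖ /
              (2 * ((n+1).factorial : ℝ))
            ≤ (2*(2*R)^(n+1)) / (2 * ((n+1).factorial : ℝ)) := by
              gcongr
              exact le_trans (norm_sub_le _ _) (by linarith)
          _ = (2*R)^(n+1) / ((n+1).factorial : ℝ) := by
              rw [mul_div_mul_left _ _ (two_ne_zero)]
      calc ‖a n p‖ = ‖w p‖ * ‖Complex.I ^ n *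
            ((((p.1 + p.2 : ℝ) : ℂ)) ^ (n+1) - (((|p.1 - p.2| : ℝ) : ℂ)) ^ (n+1)) /
              (2 * ((n+1).factorial : ℂ))‖ := by
            simp only [hadef, norm_mul]
        _ ≤ C * ((2*R)^(n+1) / ((n+1).factorial : ℝ)) :=
            mul_le_mul (hw_bound p) hX (norm_nonneg _) hC0
        _ = bnd n := by simp only [hbnddef]; rw [mul_div_assoc]
    · rw [Set.indicator_of_notMem hp]
      simp [hadef, hw_zero p hp]
  have hsummable : ∀ r : ℝ, 0 ≤ r → Summable (fun n => bnd n * r ^ n) := by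
    intro r hr
    refine Summable.of_nonneg_of_le (fun n => mul_nonneg (hbnd0 n) (pow_nonneg hr n)) (fun n => ?_)
      ((Real.summable_pow_div_factorial (2*R*r)).mul_left (C * (2*R)))
    have h1 : (n.factorial : ℝ) ≤ ((n+1).factorial : ℝ) := by
      exact_mod_cast Nat.factorial_le (Nat.le_succ n)
    have key : bnd n * r^n = (C*(2*R)) * ((2*R*r)^n / ((n+1).factorial : ℝ)) := by
      simp only [hbnddef]
      have hf2 : ((n+1).factorial : ℝ) ≠ 0 := by positivity
      field_simp
      ring
    rw [key]
    gcongr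
  have hptsummable : ∀ (k : ℂ) (p : ℝ × ℝ), Summable (fun n => ‖k ^ n • a n p‖) := by
    intro k p
    refine Summable.of_nonneg_of_le (fun n => norm_nonneg _) (fun n => ?_)
      (hsummable ‖k‖ (norm_nonneg k))
    · rw [norm_smul, norm_pow]
      calc ‖k‖^n * ‖a n p‖ ≤ ‖k‖^n * bnd n := by
            apply mul_le_mul_of_nonneg_left _ (pow_nonneg (norm_nonneg k) n)
            refine le_trans (ha_bound n p) ?_
            exact Set.indicator_le_self' (fun _ _ => hbnd0 n) p
        _ = bnd n * ‖k‖^n := by ring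
  -- key pointwise power series identity
  have hkey : ∀ (k : ℂ) (p : ℝ × ℝ), bsKernel V k p = ∑' n, k ^ n • a n p := by
    intro k p
    have hfac : ∀ n : ℕ, k ^ n • a n p = w p * (k ^ n * (Complex.I ^ n *
        ((((p.1 + p.2 : ℝ) : ℂ)) ^ (n+1) - (((|p.1 - p.2| : ℝ) : ℂ)) ^ (n+1)) /
          (2 * ((n+1).factorial : ℂ)))) := by
      intro n; simp only [hadef, smul_eq_mul]; ring
    rw [tsum_congr hfac, tsum_mul_left]
    have hker : (if k = 0 then ((min p.1 p.2 : ℝ) : ℂ) else halfLineResolventKernel k p.1 p.2)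
        = ∑' n, k ^ n * (Complex.I ^ n *
        ((((p.1 + p.2 : ℝ) : ℂ)) ^ (n+1) - (((|p.1 - p.2| : ℝ) : ℂ)) ^ (n+1)) /
          (2 * ((n+1).factorial : ℂ))) := by
      by_cases hk : k = 0
      · rw [if_pos hk, hk]
        rw [tsum_eq_single 0 (fun n hn => by simp [zero_pow hn])]
        have hmin : min p.1 p.2 = (p.1 + p.2 - |p.1 - p.2|)/2 := by
          rcases le_total p.1 p.2 with h|h
          · rw [min_eq_left h, abs_of_nonpos (by linarith)]; ring
          · rw [min_eq_right h, abs_of_nonneg (by linarith)]; ring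
        rw [hmin]
        simp only [zero_add, Nat.factorial_one, Nat.cast_one, mul_one, pow_zero, pow_one, one_mul]
        push_cast
        ring
      · rw [if_neg hk]
        have hsum : ∀ z : ℂ, Summable (fun n => z ^ n / (n.factorial : ℂ)) := by
          intro z
          apply Summable.of_norm
          simpa [norm_div, norm_pow, Complex.norm_natCast] using
            Real.summable_pow_div_factorial ‖z‖
        have hsexp : ∀ z : ℂ, Complex.exp z = ∑' n, z ^ n / (n.factorial : ℂ) := by
          intro z; rw [Complex.exp_eq_exp_ℂ, NormedSpace.exp_eq_tsum_div]
        have main : ∀ A B : ℂ,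
            (Complex.exp (Complex.I * k * A) - Complex.exp (Complex.I * k * B)) /
              (2 * Complex.I * k)
            = ∑' n, k ^ n * (Complex.I ^ n * (A ^ (n+1) - B ^ (n+1)) /
                (2 * ((n+1).factorial : ℂ))) := by
          intro A B
          rw [hsexp, hsexp, ← Summable.tsum_sub (hsum _) (hsum _), ← tsum_div_const]
          rw [Summable.tsum_eq_zero_add (((hsum (Complex.I * k * A)).sub
            (hsum (Complex.I * k * B))).div_const _)]
          have h0 : ((Complex.I * k * A) ^ 0 / ((0:ℕ).factorial : ℂ) -
              (Complex.I * k * B) ^ 0 / ((0:ℕ).factorial : ℂ)) / (2 * Complex.I * k) = 0 := by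
            simp
          rw [h0, zero_add]
          refine tsum_congr (fun n => ?_)
          have hfne : ((n+1).factorial : ℂ) ≠ 0 := Nat.cast_ne_zero.mpr (Nat.factorial_ne_zero _)
          rw [mul_pow, mul_pow, mul_pow, mul_pow]
          field_simp [Complex.I_ne_zero, hk]
          ring
        have := main ((p.1 : ℂ) + (p.2 : ℂ)) (((|p.1 - p.2| : ℝ)) : ℂ)
        rw [halfLineResolventKernel]
        simp only [Complex.ofReal_add]
        exact this
    rw [bsKernel, hker]
    simp only [hwdef]
    ring
  -- measurability
  have hw_meas : Measurable w := by
    exact ((measurable_sqrtC' hmeas).comp measurable_fst).mul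
      (Complex.measurable_ofReal.comp ((Real.continuous_sqrt.measurable.comp
        (hmeas.norm)).comp measurable_snd))
  have ha_meas : ∀ n, AEStronglyMeasurable (a n) μ := by
    intro n
    apply Measurable.aestronglyMeasurable
    apply hw_meas.mul
    apply Measurable.div _ measurable_const
    apply Measurable.mul measurable_const
    apply Measurable.sub
    · exact (Complex.measurable_ofReal.comp (measurable_fst.add measurable_snd)).pow_const _
    · exact (Complex.measurable_ofReal.comp ((measurable_fst.sub measurable_snd).abs)).pow_const _
  have hbs_meas : ∀ k : ℂ, AEStronglyMeasurable (bsKernel V k) μ := by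
    intro k
    apply Measurable.aestronglyMeasurable
    apply Measurable.mul
    apply Measurable.mul ((measurable_sqrtC' hmeas).comp measurable_fst)
    · by_cases hk : k = 0
      · simp only [if_pos hk]
        exact Complex.measurable_ofReal.comp (measurable_fst.min measurable_snd)
      · simp only [if_neg hk]
        unfold halfLineResolventKernel
        apply Measurable.div _ measurable_const
        apply Measurable.sub
        · exact Complex.measurable_exp.comp (measurable_const.mul
            ((Complex.measurable_ofReal.comp measurable_fst).add
              (Complex.measurable_ofReal.comp measurable_snd)))
        · exact Complex.measurable_exp.comp (measurable_const.mul
            (Complex.measurable_ofReal.comp ((measurable_fst.sub measurable_snd).abs)))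
    · exact Complex.measurable_ofReal.comp ((Real.continuous_sqrt.measurable.comp
        (hmeas.norm)).comp measurable_snd)
  have hbs_zero : ∀ (k : ℂ) (p : ℝ × ℝ), p ∉ T → bsKernel V k p = 0 := by
    intro k p hp
    rw [hTdef, Set.mem_prod] at hp
    push_neg at hp
    by_cases h1 : p.1 ∈ S
    · have : V p.2 = 0 := image_eq_zero_of_notMem_tsupport (hp h1)
      simp [bsKernel, this]
    · have : V p.1 = 0 := image_eq_zero_of_notMem_tsupport h1
      simp [bsKernel, sqrtC, this]
  have htsum0 : ∀ k : ℂ, 0 ≤ ∑' n, bnd n * ‖k‖ ^ n :=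
    fun k => tsum_nonneg fun n => mul_nonneg (hbnd0 n) (pow_nonneg (norm_nonneg k) n)
  have hbs_bound : ∀ (k : ℂ) (p : ℝ × ℝ),
      ‖bsKernel V k p‖ ≤ T.indicator (fun _ => ∑' n, bnd n * ‖k‖ ^ n) p := by
    intro k p
    by_cases hp : p ∈ T
    · rw [Set.indicator_of_mem hp, hkey]
      refine le_trans (norm_tsum_le_tsum_norm (hptsummable k p)) ?_
      refine Summable.tsum_le_tsum (fun n => ?_) (hptsummable k p) (hsummable ‖k‖ (norm_nonneg k))
      rw [norm_smul, norm_pow]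
      have hb := ha_bound n p
      rw [Set.indicator_of_mem hp] at hb
      calc ‖k‖^n * ‖a n p‖ ≤ ‖k‖^n * bnd n :=
            mul_le_mul_of_nonneg_left hb (pow_nonneg (norm_nonneg k) n)
        _ = bnd n * ‖k‖^n := mul_comm _ _
    · rw [Set.indicator_of_notMem hp, hbs_zero k p hp, norm_zero]
  -- MemLp and Lp-norm machinery
  have hmemOf : ∀ (f : ℝ × ℝ → ℂ) (c : ℝ), AEStronglyMeasurable f μ →
      (∀ p, ‖f p‖ ≤ T.indicator (fun _ => c) p) → MemLp f 2 μ := by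
    intro f c hfm hfb
    have hg : MemLp (T.indicator fun _ => (c:ℝ)) 2 μ :=
      memLp_indicator_const 2 hTmeas c (Or.inr hTfin.ne)
    exact MemLp.of_le hg hfm (Filter.Eventually.of_forall
      (fun p => (hfb p).trans (Real.le_norm_self _)))
  set MT : ℝ≥0∞ := μ T ^ (1 / (2:ℝ≥0∞).toReal) with hMTdef
  have hMTne : MT ≠ ⊤ :=
    ENNReal.rpow_ne_top_of_nonneg (by norm_num) hTfin.ne
  set mT : ℝ := MT.toReal with hmTdef
  have hmT0 : 0 ≤ mT := ENNReal.toReal_nonneg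
  have hsnorm : ∀ (f : ℝ × ℝ → ℂ) (c : ℝ), 0 ≤ c →
      (∀ p, ‖f p‖ ≤ T.indicator (fun _ => c) p) →
      eLpNorm f 2 μ ≤ ENNReal.ofReal c * MT := by
    intro f c hc hfb
    calc eLpNorm f 2 μ ≤ eLpNorm (T.indicator fun _ => (c:ℝ)) 2 μ :=
          eLpNorm_mono (fun p => (hfb p).trans (Real.le_norm_self _))
      _ = ‖c‖₊ * μ T ^ (1 / (2:ℝ≥0∞).toReal) :=
          eLpNorm_indicator_const hTmeas two_ne_zero ENNReal.ofNat_ne_top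
      _ = ENNReal.ofReal c * MT := by rw [← enorm_eq_nnnorm, Real.enorm_eq_ofReal hc, hMTdef]
  have hnorm_le' : ∀ (X : Lp ℂ 2 μ) (g : ℝ × ℝ → ℂ) (c : ℝ), 0 ≤ c → (⇑X =ᵐ[μ] g) →
      (∀ p, ‖g p‖ ≤ T.indicator (fun _ => c) p) → ‖X‖ ≤ c * mT := by
    intro X g c hc hXg hb
    rw [Lp.norm_def, eLpNorm_congr_ae hXg]
    have h1 := hsnorm g c hc hb
    calc (eLpNorm g 2 μ).toReal ≤ (ENNReal.ofReal c * MT).toReal :=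
          ENNReal.toReal_mono (ENNReal.mul_ne_top ENNReal.ofReal_ne_top hMTne) h1
      _ = c * mT := by rw [ENNReal.toReal_mul, ENNReal.toReal_ofReal hc, hmTdef]
  have hmem : ∀ k : ℂ, MemLp (bsKernel V k) 2 μ :=
    fun k => hmemOf _ _ (hbs_meas k) (hbs_bound k)
  have hamem : ∀ n, MemLp (a n) 2 μ := fun n => hmemOf _ _ (ha_meas n) (ha_bound n)
  set La : ℕ → Lp ℂ 2 μ := fun n => (hamem n).toLp (a n) with hLadef
  have hLa_norm : ∀ n, ‖La n‖ ≤ bnd n * mT := fun n =>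
    hnorm_le' (La n) (a n) (bnd n) (hbnd0 n) (MemLp.coeFn_toLp _) (ha_bound n)
  have hLsum : ∀ k : ℂ, Summable (fun n => k ^ n • La n) := by
    intro k
    apply Summable.of_norm
    refine Summable.of_nonneg_of_le (fun n => norm_nonneg _) (fun n => ?_)
      ((hsummable ‖k‖ (norm_nonneg k)).mul_right mT)
    rw [norm_smul, norm_pow]
    calc ‖k‖^n * ‖La n‖ ≤ ‖k‖^n * (bnd n * mT) :=
          mul_le_mul_of_nonneg_left (hLa_norm n) (pow_nonneg (norm_nonneg k) n)
      _ = bnd n * ‖k‖^n * mT := by ring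
  have hpartial : ∀ (k : ℂ) (N : ℕ),
      ⇑((hmem k).toLp (bsKernel V k) - ∑ n ∈ Finset.range N, k ^ n • La n) =ᵐ[μ]
        fun p => bsKernel V k p - ∑ n ∈ Finset.range N, k ^ n • a n p := by
    intro k N
    have h1 := Lp.coeFn_sub ((hmem k).toLp (bsKernel V k)) (∑ n ∈ Finset.range N, k ^ n • La n)
    have h2 := Lp_coeFn_sum (Finset.range N) (fun n => k ^ n • La n)
    have h3 : ∀ n, ⇑(k ^ n • La n) =ᵐ[μ] fun p => k ^ n • a n p := by
      intro n
      exact (Lp.coeFn_smul _ _).trans ((MemLp.coeFn_toLp (hamem n)).mono fun p hp => by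
        simp [hp, hLadef])
    have h4 : ∀ᵐ p ∂μ, ∀ n ∈ Finset.range N, (k ^ n • La n : Lp ℂ 2 μ) p = k ^ n • a n p := by
      rw [Filter.eventually_all_finset]
      exact fun n _ => h3 n
    filter_upwards [h1, h2, h4, MemLp.coeFn_toLp (hmem k)] with p hp1 hp2 hp4 hp5
    rw [hp1]
    simp only [Pi.sub_apply]
    rw [hp5, hp2]
    congr 1
    exact Finset.sum_congr rfl hp4
  have htail_bound : ∀ (k : ℂ) (N : ℕ) (p : ℝ × ℝ),
      ‖bsKernel V k p - ∑ n ∈ Finset.range N, k ^ n • a n p‖ ≤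
        T.indicator (fun _ => ∑' i, bnd (i + N) * ‖k‖ ^ (i + N)) p := by
    intro k N p
    by_cases hp : p ∈ T
    · rw [Set.indicator_of_mem hp, hkey]
      have hsg : Summable (fun n => k ^ n • a n p) := (hptsummable k p).of_norm
      rw [← Summable.sum_add_tsum_nat_add N hsg, add_sub_cancel_left]
      refine le_trans (norm_tsum_le_tsum_norm ((summable_nat_add_iff N).2 (hptsummable k p))) ?_
      refine Summable.tsum_le_tsum (fun i => ?_) ((summable_nat_add_iff N).2 (hptsummable k p))
        ((summable_nat_add_iff N).2 (hsummable ‖k‖ (norm_nonneg k)))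
      rw [norm_smul, norm_pow]
      have hb := ha_bound (i + N) p
      rw [Set.indicator_of_mem hp] at hb
      calc ‖k‖^(i+N) * ‖a (i+N) p‖ ≤ ‖k‖^(i+N) * bnd (i+N) :=
            mul_le_mul_of_nonneg_left hb (pow_nonneg (norm_nonneg k) _)
        _ = bnd (i+N) * ‖k‖^(i+N) := mul_comm _ _
    · rw [Set.indicator_of_notMem hp, hbs_zero k p hp]
      have hz : ∀ n, a n p = 0 := fun n => by simp [hadef, hw_zero p hp]
      simp [hz]
  have htail0 : ∀ k : ℂ, Filter.Tendsto (fun N => ∑' i, bnd (i + N) * ‖k‖ ^ (i + N))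
      Filter.atTop (nhds 0) :=
    fun k => tendsto_sum_nat_add (fun n => bnd n * ‖k‖ ^ n)
  have hHasSum : ∀ k : ℂ, HasSum (fun n => k ^ n • La n) ((hmem k).toLp (bsKernel V k)) := by
    intro k
    have hs := (hLsum k).hasSum
    have t1 := hs.tendsto_sum_nat
    have t2 : Filter.Tendsto (fun N => ∑ n ∈ Finset.range N, k ^ n • La n) Filter.atTop
        (nhds ((hmem k).toLp (bsKernel V k))) := by
      rw [tendsto_iff_norm_sub_tendsto_zero]
      apply squeeze_zero (fun N => norm_nonneg _) (fun N => ?_)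
        (by simpa using (htail0 k).mul_const mT)
      rw [norm_sub_rev]
      exact hnorm_le' _ _ _
        (tsum_nonneg fun i => mul_nonneg (hbnd0 _) (pow_nonneg (norm_nonneg k) _))
        (hpartial k N) (htail_bound k N)
    rwa [tendsto_nhds_unique t1 t2] at hs
  refine ⟨hmem, ?_⟩
  set q : FormalMultilinearSeries ℂ ℂ (Lp ℂ 2 μ) :=
    fun n => ContinuousMultilinearMap.mkPiRing ℂ (Fin n) (La n) with hqdef
  have hrad : q.radius = ⊤ := by
    apply FormalMultilinearSeries.radius_eq_top_of_summable_norm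
    intro r
    refine Summable.of_nonneg_of_le (fun n => by positivity) (fun n => ?_)
      ((hsummable r r.coe_nonneg).mul_right mT)
    have hq : ‖q n‖ = ‖La n‖ := ContinuousMultilinearMap.norm_mkPiRing _
    rw [hq]
    calc ‖La n‖ * (r:ℝ)^n ≤ (bnd n * mT) * (r:ℝ)^n :=
          mul_le_mul_of_nonneg_right (hLa_norm n) (pow_nonneg r.coe_nonneg n)
      _ = bnd n * (r:ℝ)^n * mT := by ring
  have hFP : HasFPowerSeriesOnBall (fun k => (hmem k).toLp (bsKernel V k)) q 0 ⊤ := by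
    refine ⟨by rw [hrad], ENNReal.zero_lt_top, ?_⟩
    intro y hy
    have := hHasSum y
    simpa [hqdef, ContinuousMultilinearMap.mkPiRing_apply] using this
  intro k
  have hk : k ∈ EMetric.ball (0:ℂ) ⊤ := EMetric.mem_ball.2 (edist_lt_top k 0)
  exact (hFP.analyticAt_of_mem hk).differentiableAt
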